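/- Every ℤ[q₁^{±1},q₂^{±1}]-multiple of F_n = ∏_{1≤i,j≤n} (1 - q₂ z_i/z_j) lies in the integral shuffle algebra 𝒮: i.e., for any symmetric Laurent polynomial P, the element P·F_n satisfies all the divisibility conditions of Definition of 𝒮. -/

import Mathlib

/- Framework: we work inside the field FF of rational functions over ℤ in
countably many variables q₁, q₂, z₀, z₁, z₂, … (the fraction field of
MvPolynomial ℕ ℤ).  A Laurent polynomial R(z₁,…,z_n) over ℤ[q₁^±,q₂^±] is
encoded by its finitely supported coefficient function
c : (Fin n → ℤ) →₀ FF (with values in the Laurent subring ℤ[q₁^±,q₂^±]),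
and `evalC c w` is its value ∑_m c_m ∏ w_i^{m_i} at a point w.  Since the z_i
are algebraically independent, equalities of such expressions at the generic
point w = (z₀,…,z_{n-1}) are equalities of rational functions. -/

noncomputable section

abbrev FF : Type := FractionRing (MvPolynomial ℕ ℤ)

noncomputable def q₁ : FF := algebraMap (MvPolynomial ℕ ℤ) FF (MvPolynomial.X 0)
noncomputable def q₂ : FF := algebraMap (MvPolynomial ℕ ℤ) FF (MvPolynomial.X 1)
/-- the generic variables z_i (also used as the variables x_i of the
specializations in Definition `SatisfiesDiv`) -/
noncomputable def zz (i : ℕ) : FF := algebraMap (MvPolynomial ℕ ℤ) FF (MvPolynomial.X (i + 2))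
noncomputable def q₃ : FF := (q₁ * q₂)⁻¹

noncomputable def zeta (x : FF) : FF :=
  (1 - x * q₁) * (1 - x * q₂) * (1 - q₁ * q₂ / x) / (1 - x)

/-- the Laurent polynomial subring ℤ[q₁^{±1},q₂^{±1}] ⊆ FF -/
noncomputable def Lq : Subring FF := Subring.closure {q₁, q₁⁻¹, q₂, q₂⁻¹}

/-- the Laurent polynomial subring ℤ[q₁^{±1},q₂^{±1}][x₁^{±1},…,x_k^{±1}] ⊆ FF,
where x_i := zz i -/
noncomputable def Lqx (k : ℕ) : Subring FF :=
  Subring.closure ({q₁, q₁⁻¹, q₂, q₂⁻¹} ∪ (Set.range fun i : Fin k => zz i)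
    ∪ (Set.range fun i : Fin k => (zz i)⁻¹))

/-- value of the Laurent polynomial with coefficients c at the point w -/
noncomputable def evalC {n : ℕ} (c : (Fin n → ℤ) →₀ FF) (w : Fin n → FF) : FF :=
  ∑ m ∈ c.support, c m * ∏ i, w i ^ (m i)

/-- the specialization point (x₁, x₁q₂, …, x₁q₂^{n₁-1}, …, x_k, …, x_kq₂^{n_k-1})
attached to a partition (n₁,…,n_k), with x_i := zz i -/
noncomputable def specTuple {n : ℕ} (k : ℕ) (nn : Fin k → ℕ) : Fin n → FF :=
  fun j => (((List.finRange k).flatMap fun i =>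
    (List.range (nn i)).map fun s => zz i * q₂ ^ s).getD j 1)

/-- the divisor (eqn "divisible by") attached to a partition (n₁ ≥ … ≥ n_k) -/
noncomputable def divisor (k : ℕ) (nn : Fin k → ℕ) : FF :=
  (∏ i : Fin k, ((1 - q₂) ^ (nn i) *
      ∏ s ∈ Finset.Icc 1 (nn i - 1), zeta (q₂ ^ s) ^ (nn i - s))) *
  ∏ i : Fin k, ∏ j ∈ Finset.univ.filter (fun j : Fin k => i < j),
    ((∏ a ∈ Finset.Icc (1 : ℤ) ((nn i : ℤ) - 1), ∏ b ∈ Finset.Icc (0 : ℤ) ((nn j : ℤ) - 1),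
        (zz i * q₁ - zz j * q₂ ^ (b - a))) *
     (∏ a ∈ Finset.Icc (1 : ℤ) ((nn i : ℤ) - 1), ∏ b ∈ Finset.Icc (0 : ℤ) ((nn j : ℤ) - 1),
        (zz j * q₁ - zz i * q₂ ^ (a - b - 1))))

/-- coefficients lie in ℤ[q₁^{±1},q₂^{±1}] -/
def HasLqCoeffs {n : ℕ} (c : (Fin n → ℤ) →₀ FF) : Prop := ∀ m ∈ c.support, c m ∈ Lq

/-- the Laurent polynomial is symmetric in z₁,…,z_n -/
def IsSymmC {n : ℕ} (c : (Fin n → ℤ) →₀ FF) : Prop :=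
  ∀ σ : Equiv.Perm (Fin n), ∀ m : Fin n → ℤ, c (m ∘ σ) = c m

/-- the divisibility conditions of Definition "shuffle": for every partition
(n₁ ≥ … ≥ n_k) ⊢ n, the specialization is divisible by `divisor` in
ℤ[q₁^{±1},q₂^{±1}][x₁^{±1},…,x_k^{±1}] -/
def SatisfiesDiv {n : ℕ} (c : (Fin n → ℤ) →₀ FF) : Prop :=
  ∀ (k : ℕ) (nn : Fin k → ℕ), (∀ i, 0 < nn i) → Antitone nn → (∑ i, nn i) = n →
    ∃ g ∈ Lqx k, evalC c (specTuple k nn) = divisor k nn * g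

/-- membership in the integral shuffle algebra 𝒮 (in degree n) -/
def InS {n : ℕ} (c : (Fin n → ℤ) →₀ FF) : Prop :=
  HasLqCoeffs c ∧ IsSymmC c ∧ SatisfiesDiv c



/-! ### Auxiliary machinery -/

set_option synthInstance.maxHeartbeats 1000000
set_option maxHeartbeats 2000000

namespace S8aux

open AddMonoidAlgebra

lemma ffinj : Function.Injective (algebraMap (MvPolynomial ℕ ℤ) FF) :=
  IsFractionRing.injective _ _

lemma q₂_ne : q₂ ≠ 0 := by
  simpa [q₂] using (map_ne_zero_iff _ ffinj).mpr (MvPolynomial.X_ne_zero (R := ℤ) (n := 1))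

lemma zz_ne (i : ℕ) : zz i ≠ 0 := by
  simpa [zz] using (map_ne_zero_iff _ ffinj).mpr (MvPolynomial.X_ne_zero (R := ℤ) (n := i + 2))

lemma q₂_mem {k : ℕ} : q₂ ∈ Lqx k := by
  apply Subring.subset_closure; left; left; simp

lemma Lq_le_Lqx {k : ℕ} {x : FF} (hx : x ∈ Lq) : x ∈ Lqx k := by
  refine Subring.closure_mono ?_ hx
  intro y hy; left; left; exact hy

lemma zz_mem {k : ℕ} (i : Fin k) : zz i ∈ Lqx k := by
  apply Subring.subset_closure; left; right; exact ⟨i, rfl⟩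

lemma zz_inv_mem {k : ℕ} (i : Fin k) : (zz i)⁻¹ ∈ Lqx k := by
  apply Subring.subset_closure; right; exact ⟨i, rfl⟩

lemma zpow_mem {S : Subring FF} {x : FF} (hx : x ∈ S) (hxi : x⁻¹ ∈ S) (m : ℤ) :
    x ^ m ∈ S := by
  cases m with
  | ofNat p => simpa using pow_mem hx p
  | negSucc p => rw [zpow_negSucc, ← inv_pow]; exact pow_mem hxi _

/-- evaluation as an algebra homomorphism -/
noncomputable def Phi {n : ℕ} (w : Fin n → FF) (hw : ∀ i, w i ≠ 0) :
    AddMonoidAlgebra FF (Fin n → ℤ) →ₐ[FF] FF :=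
  AddMonoidAlgebra.lift FF FF (Fin n → ℤ)
    { toFun := fun m => ∏ i, w i ^ (Multiplicative.toAdd m i)
      map_one' := by simp
      map_mul' := fun a b => by
        show (∏ i, w i ^ (Multiplicative.toAdd (a * b)) i) = _
        rw [← Finset.prod_mul_distrib]
        exact Finset.prod_congr rfl fun i _ => by
          rw [← zpow_add₀ (hw i)]; rfl }

lemma Phi_eval {n : ℕ} (w : Fin n → FF) (hw : ∀ i, w i ≠ 0)
    (c : AddMonoidAlgebra FF (Fin n → ℤ)) :
    evalC c.coeff w = Phi w hw c := by
  rw [Phi, AddMonoidAlgebra.lift_apply]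
  simp only [Finsupp.sum, smul_eq_mul, MonoidHom.coe_mk, OneHom.coe_mk]
  rfl

lemma Phi_single {n : ℕ} (w : Fin n → FF) (hw : ∀ i, w i ≠ 0)
    (d : Fin n → ℤ) (r : FF) :
    Phi w hw (AddMonoidAlgebra.single d r) = r * ∏ i, w i ^ d i := by
  rw [Phi, AddMonoidAlgebra.lift_single]
  simp [smul_eq_mul]

lemma prod_single_exp {n : ℕ} (x : Fin n → FF) (i : Fin n) (c : ℤ) :
    ∏ l, x l ^ ((Pi.single i c : Fin n → ℤ) l) = x i ^ c := by
  rw [Finset.prod_eq_single i (fun l _ hl => by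
      rw [Pi.single_eq_of_ne hl, zpow_zero]) (by simp)]
  rw [Pi.single_eq_same]

lemma prod_d {n : ℕ} (x : Fin n → FF) (hx : ∀ l, x l ≠ 0) (i j : Fin n) :
    ∏ l, x l ^ ((Pi.single i (1:ℤ) - Pi.single j 1 : Fin n → ℤ) l)
      = x i * (x j)⁻¹ := by
  have h1 : ∀ l, x l ^ ((Pi.single i (1:ℤ) - Pi.single j 1 : Fin n → ℤ) l)
      = x l ^ ((Pi.single i (1:ℤ) : Fin n → ℤ) l)
        * x l ^ ((Pi.single j (-1:ℤ) : Fin n → ℤ) l) := by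
    intro l
    rw [← zpow_add₀ (hx l)]
    congr 1
    rw [Pi.sub_apply]
    simp only [Pi.single_apply]
    split_ifs <;> ring
  rw [Finset.prod_congr rfl (fun l _ => h1 l), Finset.prod_mul_distrib,
    prod_single_exp, prod_single_exp, zpow_one, zpow_neg_one]

/-- a single factor of F_n -/
noncomputable def Pf {n : ℕ} (i j : Fin n) : AddMonoidAlgebra FF (Fin n → ℤ) :=
  1 - AddMonoidAlgebra.single (Pi.single i (1:ℤ) - Pi.single j 1) q₂

/-- the coefficient data of F_n -/
noncomputable def cF (n : ℕ) : AddMonoidAlgebra FF (Fin n → ℤ) :=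
  ∏ i : Fin n, ∏ j : Fin n, Pf i j

lemma Phi_cF {n : ℕ} (w : Fin n → FF) (hw : ∀ i, w i ≠ 0) :
    Phi w hw (cF n) = ∏ i : Fin n, ∏ j : Fin n, (1 - q₂ * w i / w j) := by
  rw [cF, map_prod]
  refine Finset.prod_congr rfl fun i _ => ?_
  rw [map_prod]
  refine Finset.prod_congr rfl fun j _ => ?_
  rw [Pf, map_sub, map_one, Phi_single, prod_d w hw, div_eq_mul_inv, mul_assoc]

lemma eval_main {n : ℕ} (cP : AddMonoidAlgebra FF (Fin n → ℤ)) (w : Fin n → FF)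
    (hw : ∀ i, w i ≠ 0) :
    evalC (cP * cF n).coeff w
      = evalC cP.coeff w * ∏ i : Fin n, ∏ j : Fin n, (1 - q₂ * w i / w j) := by
  rw [Phi_eval w hw, Phi_eval w hw cP, map_mul, Phi_cF]

/-- coefficients all in Lq (not just on the support) -/
def LqC {n : ℕ} (c : AddMonoidAlgebra FF (Fin n → ℤ)) : Prop := ∀ m, c.coeff m ∈ Lq

lemma LqC_of_has {n : ℕ} {c : (Fin n → ℤ) →₀ FF} (h : HasLqCoeffs c) : LqC (AddMonoidAlgebra.ofCoeff c) := by
  intro m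
  show c m ∈ Lq
  by_cases hm : m ∈ c.support
  · exact h m hm
  · rw [Finsupp.notMem_support_iff.mp hm]; exact zero_mem _

lemma LqC_one {n : ℕ} : LqC (1 : AddMonoidAlgebra FF (Fin n → ℤ)) := by
  intro m
  rw [AddMonoidAlgebra.one_def]
  rcases eq_or_ne m 0 with h | h
  · rw [h, AddMonoidAlgebra.coeff_single, Finsupp.single_eq_same]; exact one_mem _
  · rw [AddMonoidAlgebra.coeff_single, Finsupp.single_eq_of_ne h]; exact zero_mem _

lemma LqC_single {n : ℕ} (d : Fin n → ℤ) {r : FF} (hr : r ∈ Lq) :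
    LqC (AddMonoidAlgebra.single d r) := by
  intro m
  rcases eq_or_ne m d with h | h
  · rw [h, show (AddMonoidAlgebra.single d r).coeff d = r from
      Finsupp.single_eq_same]
    exact hr
  · rw [show (AddMonoidAlgebra.single d r).coeff m = 0 from
      Finsupp.single_eq_of_ne h]
    exact zero_mem _

lemma LqC_sub {n : ℕ} {f g : AddMonoidAlgebra FF (Fin n → ℤ)}
    (hf : LqC f) (hg : LqC g) : LqC (f - g) := by
  intro m
  rw [AddMonoidAlgebra.coeff_sub, Finsupp.sub_apply]
  exact sub_mem (hf m) (hg m)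

lemma LqC_mul {n : ℕ} {f g : AddMonoidAlgebra FF (Fin n → ℤ)}
    (hf : LqC f) (hg : LqC g) : LqC (f * g) := by
  classical
  intro m
  rw [AddMonoidAlgebra.coeff_mul, Finsupp.sum]
  refine sum_mem fun a _ => ?_
  rw [Finsupp.sum]
  refine sum_mem fun b _ => ?_
  split
  · exact mul_mem (hf a) (hg b)
  · exact zero_mem _

lemma q₂_mem_Lq : q₂ ∈ Lq := by
  apply Subring.subset_closure; simp

lemma LqC_cF {n : ℕ} : LqC (cF n) := by
  rw [cF]
  refine Finset.prod_induction _ LqC (fun a b => LqC_mul) LqC_one fun i _ => ?_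
  refine Finset.prod_induction _ LqC (fun a b => LqC_mul) LqC_one fun j _ => ?_
  exact LqC_sub LqC_one (LqC_single _ q₂_mem_Lq)

/-- precomposition with a permutation, as an additive equivalence -/
def permAddEquiv {n : ℕ} (σ : Equiv.Perm (Fin n)) : (Fin n → ℤ) ≃+ (Fin n → ℤ) where
  toFun m := m ∘ σ.symm
  invFun m := m ∘ σ
  left_inv m := by ext l; simp
  right_inv m := by ext l; simp
  map_add' a b := rfl

lemma permAddEquiv_apply {n : ℕ} (σ : Equiv.Perm (Fin n)) (m : Fin n → ℤ) (l : Fin n) :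
    permAddEquiv σ m l = m (σ.symm l) := rfl

lemma single_comp_symm {n : ℕ} (σ : Equiv.Perm (Fin n)) (i : Fin n) :
    (Pi.single i (1:ℤ)) ∘ ⇑σ.symm = Pi.single (σ i) 1 := by
  funext l
  simp only [Function.comp_apply]
  rcases eq_or_ne l (σ i) with h | h
  · subst h; rw [Equiv.symm_apply_apply, Pi.single_eq_same, Pi.single_eq_same]
  · have h2 : σ.symm l ≠ i := fun hc => h (by rw [← hc, Equiv.apply_symm_apply])
    rw [Pi.single_eq_of_ne h2, Pi.single_eq_of_ne h]

lemma symm_Pf {n : ℕ} (σ : Equiv.Perm (Fin n)) (i j : Fin n) :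
    AddMonoidAlgebra.domCongr FF FF (permAddEquiv σ) (Pf i j) = Pf (σ i) (σ j) := by
  rw [Pf, map_sub, map_one, AddMonoidAlgebra.domCongr_single, Pf]
  congr 2
  funext l
  have h1 := congrFun (single_comp_symm σ i) l
  have h2 := congrFun (single_comp_symm σ j) l
  simp only [Function.comp_apply] at h1 h2
  rw [permAddEquiv_apply, Pi.sub_apply, Pi.sub_apply, h1, h2]

lemma symm_cF {n : ℕ} (σ : Equiv.Perm (Fin n)) :
    AddMonoidAlgebra.domCongr FF FF (permAddEquiv σ) (cF n) = cF n := by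
  rw [cF, map_prod]
  have step1 : ∀ i : Fin n,
      AddMonoidAlgebra.domCongr FF FF (permAddEquiv σ) (∏ j : Fin n, Pf i j)
        = ∏ j : Fin n, Pf (σ i) (σ j) := fun i => by
    rw [map_prod]
    exact Finset.prod_congr rfl fun j _ => symm_Pf σ i j
  rw [Finset.prod_congr rfl fun i _ => step1 i]
  have step2 : ∀ i : Fin n, (∏ j : Fin n, Pf (σ i) (σ j)) = ∏ j : Fin n, Pf (σ i) j :=
    fun i => Equiv.prod_comp σ (fun j => Pf (σ i) j)
  rw [Finset.prod_congr rfl fun i _ => step2 i]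
  exact Equiv.prod_comp σ (fun i => ∏ j : Fin n, Pf i j)

/-! ### specTuple facts -/

lemma bind_singleton_map {α β : Type*} (g : α → β) :
    ∀ l : List α, (l.flatMap fun x => [g x]) = l.map g := by
  intro l
  induction l with
  | nil => rfl
  | cons a l ih =>
    rw [List.flatMap_cons, ih]
    rfl

lemma specL_length (k : ℕ) (nn : Fin k → ℕ) :
    ((List.finRange k).flatMap fun i =>
      (List.range (nn i)).map fun s => zz i * q₂ ^ s).length = ∑ i, nn i := by
  rw [List.length_flatMap]
  have h : (fun i : Fin k =>
      (List.map (fun s => zz i * q₂ ^ s) (List.range (nn i))).length) = nn := by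
    funext i; simp
  rw [h, ← List.ofFn_eq_map, List.sum_ofFn]

lemma specTuple_apply {n k : ℕ} (nn : Fin k → ℕ) (j : Fin n) :
    specTuple k nn j = (((List.finRange k).flatMap fun i =>
      (List.range (nn i)).map fun s => zz i * q₂ ^ s).getD j 1) := rfl

lemma specTuple_ne_zero {n k : ℕ} (nn : Fin k → ℕ) (j : Fin n) :
    specTuple k nn j ≠ 0 := by
  rw [specTuple_apply]
  set L : List FF := (List.finRange k).flatMap fun i =>
    (List.range (nn i)).map fun s => zz i * q₂ ^ s with hL
  by_cases h : (j : ℕ) < L.length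
  · rw [List.getD_eq_getElem L 1 h]
    have hm := List.getElem_mem h
    obtain ⟨i, -, hm2⟩ := List.mem_flatMap.mp hm
    obtain ⟨s, -, hval⟩ := List.mem_map.mp hm2
    have hnz : zz i * q₂ ^ s ≠ 0 := mul_ne_zero (zz_ne i) (pow_ne_zero s q₂_ne)
    rwa [hval] at hnz
  · rw [List.getD_eq_default L 1 (by omega)]
    exact one_ne_zero

lemma spec_ones (n : ℕ) (j : Fin n) :
    specTuple n (fun _ => 1) j = zz j := by
  rw [specTuple_apply]
  have h1 : ((List.finRange n).flatMap fun (i : Fin n) =>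
      (List.range 1).map fun s => zz i * q₂ ^ s)
      = (List.finRange n).map fun i : Fin n => zz i * q₂ ^ 0 := by
    rw [show (fun i : Fin n => (List.range 1).map fun s => zz i * q₂ ^ s)
        = fun i : Fin n => [zz i * q₂ ^ 0] from funext fun i => by
          simp [List.range_succ]]
    exact bind_singleton_map _ _
  rw [h1]
  have hj : (j : ℕ) < ((List.finRange n).map fun i : Fin n => zz (i:ℕ) * q₂ ^ 0).length := by
    simpa using j.isLt
  rw [List.getD_eq_getElem _ 1 hj]
  simp [List.getElem_finRange]

lemma divisor_ones (n : ℕ) : divisor n (fun _ => 1) = (1 - q₂) ^ n := by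
  have e1 : Finset.Icc 1 (1 - 1 : ℕ) = (∅ : Finset ℕ) := Finset.Icc_eq_empty (by omega)
  have e2 : Finset.Icc (1 : ℤ) (((1 : ℕ) : ℤ) - 1) = (∅ : Finset ℤ) :=
    Finset.Icc_eq_empty (by norm_num)
  simp [divisor, e1, e2]

lemma evalC_zz_mem {n : ℕ} {c : AddMonoidAlgebra FF (Fin n → ℤ)} (h : LqC c) :
    evalC c.coeff (fun j : Fin n => zz j) ∈ Lqx n := by
  rw [evalC]
  exact sum_mem fun m _ => mul_mem (Lq_le_Lqx (h m))
    (prod_mem fun i _ => zpow_mem (zz_mem i) (zz_inv_mem i) _)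

/-! ### the divisibility conditions -/

lemma satdiv {n : ℕ} (cP : AddMonoidAlgebra FF (Fin n → ℤ)) (hP : LqC cP) :
    SatisfiesDiv (n := n) (cP * cF n).coeff := by
  classical
  intro k nn hpos hanti hsum
  have hw : ∀ j : Fin n, specTuple k nn j ≠ 0 := specTuple_ne_zero nn
  by_cases hone : ∀ i, nn i = 1
  · -- all parts equal to 1
    have hk : k = n := by rw [← hsum]; simp [hone]
    subst hk
    have hnn : nn = fun _ => 1 := funext hone
    subst hnn
    have hspec : specTuple (n := k) k (fun _ => 1) = fun j : Fin k => zz j :=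
      funext (spec_ones k)
    rw [hspec] at hw ⊢
    rw [eval_main cP _ hw, divisor_ones]
    have inner : ∀ i : Fin k, ∏ j : Fin k, (1 - q₂ * zz i / zz j)
        = (1 - q₂) * ∏ j ∈ Finset.univ.erase i, (1 - q₂ * zz i / zz j) := by
      intro i
      rw [← Finset.mul_prod_erase Finset.univ _ (Finset.mem_univ i)]
      congr 1
      rw [mul_div_assoc, div_self (zz_ne i), mul_one]
    rw [Finset.prod_congr rfl fun i _ => inner i, Finset.prod_mul_distrib,
      Finset.prod_const, Finset.card_univ, Fintype.card_fin]
    refine ⟨evalC cP.coeff (fun j : Fin k => zz j) *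
      ∏ i : Fin k, ∏ j ∈ Finset.univ.erase i, (1 - q₂ * zz i / zz j), ?_, by ring⟩
    refine mul_mem (evalC_zz_mem hP) (prod_mem fun i _ => prod_mem fun j _ => ?_)
    rw [div_eq_mul_inv]
    exact sub_mem (one_mem _) (mul_mem (mul_mem q₂_mem (zz_mem i)) (zz_inv_mem j))
  · -- some part is at least 2 : the specialization vanishes
    push_neg at hone
    obtain ⟨i₀, hi₀⟩ := hone
    have h2 : 2 ≤ nn i₀ := by have := hpos i₀; omega
    set L : List FF := (List.finRange k).flatMap fun i =>
      (List.range (nn i)).map fun s => zz i * q₂ ^ s with hL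
    have hlen : L.length = n := by rw [hL, specL_length, hsum]
    have m0 : zz i₀ * q₂ ^ 0 ∈ L := by
      rw [hL]
      exact List.mem_flatMap.mpr ⟨i₀, List.mem_finRange i₀,
        List.mem_map.mpr ⟨0, List.mem_range.mpr (by omega), rfl⟩⟩
    have m1 : zz i₀ * q₂ ^ 1 ∈ L := by
      rw [hL]
      exact List.mem_flatMap.mpr ⟨i₀, List.mem_finRange i₀,
        List.mem_map.mpr ⟨1, List.mem_range.mpr (by omega), rfl⟩⟩
    obtain ⟨t, ht, het⟩ := List.mem_iff_getElem.mp m0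
    obtain ⟨t', ht', het'⟩ := List.mem_iff_getElem.mp m1
    have hwt : specTuple (n := n) k nn ⟨t, hlen ▸ ht⟩ = zz i₀ * q₂ ^ 0 := by
      rw [specTuple_apply, ← hL]
      show L.getD t 1 = _
      rw [List.getD_eq_getElem L 1 ht, het]
    have hwt' : specTuple (n := n) k nn ⟨t', hlen ▸ ht'⟩ = zz i₀ * q₂ ^ 1 := by
      rw [specTuple_apply, ← hL]
      show L.getD t' 1 = _
      rw [List.getD_eq_getElem L 1 ht', het']
    have hzero : (∏ i : Fin n, ∏ j : Fin n,
        (1 - q₂ * specTuple k nn i / specTuple k nn j)) = 0 := by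
      apply Finset.prod_eq_zero (Finset.mem_univ (⟨t, hlen ▸ ht⟩ : Fin n))
      apply Finset.prod_eq_zero (Finset.mem_univ (⟨t', hlen ▸ ht'⟩ : Fin n))
      rw [hwt, hwt']
      have hne : q₂ * (zz i₀ * q₂ ^ 0) ≠ 0 :=
        mul_ne_zero q₂_ne (mul_ne_zero (zz_ne i₀) (pow_ne_zero 0 q₂_ne))
      rw [show zz i₀ * q₂ ^ 1 = q₂ * (zz i₀ * q₂ ^ 0) by ring, div_self hne, sub_self]
    refine ⟨0, zero_mem _, ?_⟩
    rw [mul_zero, eval_main cP _ hw, hzero, mul_zero]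

end S8aux

/- STATEMENT 8: every ℤ[q₁^{±1},q₂^{±1}]-multiple of
F_n = ∏_{1≤i,j≤n}(1 - q₂ z_i/z_j) lies in 𝒮: for any symmetric Laurent
polynomial P (coefficient data cP with coefficients in ℤ[q₁^±,q₂^±]), the
Laurent polynomial P·F_n (encoded by coefficient data c with
evalC c = evalC cP · F_n at the generic point) satisfies all the conditions
defining 𝒮. -/

theorem statement8 (n : ℕ) (cP : (Fin n → ℤ) →₀ FF)
    (hP : HasLqCoeffs cP) (hPsym : IsSymmC cP) :
    ∃ c : (Fin n → ℤ) →₀ FF, InS c ∧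
      evalC c (fun i => zz i) =
        evalC cP (fun i => zz i) *
          ∏ i : Fin n, ∏ j : Fin n, (1 - q₂ * zz i / zz j) := by
  classical
  let cP' : AddMonoidAlgebra FF (Fin n → ℤ) := AddMonoidAlgebra.ofCoeff cP
  have hLq : S8aux.LqC (n := n) cP' := S8aux.LqC_of_has hP
  refine ⟨(cP' * S8aux.cF n).coeff, ⟨?_, ?_, ?_⟩, ?_⟩
  · -- coefficients in Lq
    intro m _
    exact S8aux.LqC_mul hLq S8aux.LqC_cF m
  · -- symmetry
    intro σ m
    have key : AddMonoidAlgebra.domCongr FF FF (S8aux.permAddEquiv σ)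
        (cP' * S8aux.cF n)
        = cP' * S8aux.cF n := by
      rw [map_mul, S8aux.symm_cF]
      congr 1
      refine AddMonoidAlgebra.ext (Finsupp.ext fun m' => ?_)
      rw [AddMonoidAlgebra.coeff_domCongr]
      exact hPsym σ m'
    calc (cP' * S8aux.cF n).coeff (m ∘ σ)
        = (AddMonoidAlgebra.domCongr FF FF (S8aux.permAddEquiv σ)
            ((cP' * S8aux.cF n))).coeff m := by rw [AddMonoidAlgebra.coeff_domCongr]; rfl
      _ = (cP' * S8aux.cF n).coeff m := by rw [key]
  · -- divisibility conditions
    exact S8aux.satdiv cP' hLq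
  · -- value at the generic point
    exact S8aux.eval_main cP' (fun i : Fin n => zz i) (fun i => S8aux.zz_ne i)

end
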